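/- Let d ≥ 1 and m ≥ 0 be integers, let β > 0, and let θ, x, u_1, …, u_m ∈ ℝ^d. Set A = β I + Σ_{k=1}^m u_k u_kᵀ. Then |θᵀ x| ≤ ‖x‖_{A^{-1}} · ( √β · ‖θ‖ + √d · Σ_{k=1}^m |θᵀ u_k| ), where ‖x‖_{A^{-1}} = √(xᵀ A^{-1} x). -/

import Mathlib

open Matrix

lemma sqrt_add_le' {a b : ℝ} (ha : 0 ≤ a) (hb : 0 ≤ b) :
    Real.sqrt (a + b) ≤ Real.sqrt a + Real.sqrt b := by
  rw [show a + b = Real.sqrt a ^ 2 + Real.sqrt b ^ 2 by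
    rw [Real.sq_sqrt ha, Real.sq_sqrt hb]]
  calc Real.sqrt (Real.sqrt a ^ 2 + Real.sqrt b ^ 2)
      ≤ Real.sqrt ((Real.sqrt a + Real.sqrt b) ^ 2) := by
        apply Real.sqrt_le_sqrt; nlinarith [Real.sqrt_nonneg a, Real.sqrt_nonneg b]
    _ = Real.sqrt a + Real.sqrt b := Real.sqrt_sq (by positivity)

lemma quad_vecMulVec {n : ℕ} (v w z : Fin n → ℝ) :
    w ⬝ᵥ (vecMulVec v v *ᵥ z) = (w ⬝ᵥ v) * (v ⬝ᵥ z) := by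
  simp only [dotProduct, mulVec, vecMulVec_apply, Finset.mul_sum, Finset.sum_mul]
  rw [Finset.sum_comm]
  exact Finset.sum_congr rfl fun i _ => Finset.sum_congr rfl fun j _ => by ring

lemma vecMulVec_posSemidef {n : ℕ} (v : Fin n → ℝ) : (vecMulVec v v).PosSemidef := by
  refine Matrix.PosSemidef.of_dotProduct_mulVec_nonneg ?_ ?_
  · ext i j; simp [vecMulVec_apply, conjTranspose, mul_comm]
  · intro y
    have h := quad_vecMulVec v y y
    simp only [star_trivial]
    rw [h, dotProduct_comm]
    exact mul_self_nonneg _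

lemma dotProduct_sum' {n m : ℕ} (v : Fin n → ℝ) (w : Fin m → Fin n → ℝ) :
    v ⬝ᵥ (∑ k, w k) = ∑ k, v ⬝ᵥ w k := by
  simp only [dotProduct, Finset.sum_apply, Finset.mul_sum]
  rw [Finset.sum_comm]

lemma sum_mulVec' {n m : ℕ} (M : Fin m → Matrix (Fin n) (Fin n) ℝ) (z : Fin n → ℝ) :
    (∑ k, M k) *ᵥ z = ∑ k, (M k *ᵥ z) := by
  ext i
  simp only [mulVec, dotProduct, Matrix.sum_apply, Finset.sum_mul, Finset.sum_apply]
  rw [Finset.sum_comm]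

/-- **Deterministic core of the change-of-measure lemma.**
With `A = β I + ∑ k, u_k u_kᵀ`, for all `θ, x ∈ ℝ^d`:
`|θᵀ x| ≤ ‖x‖_{A⁻¹} · (√β ‖θ‖ + √d · ∑ k |θᵀ u_k|)`. -/
theorem change_of_measure {d m : ℕ} (hd : 1 ≤ d) (β : ℝ) (hβ : 0 < β)
    (θ x : Fin d → ℝ) (u : Fin m → Fin d → ℝ)
    (A : Matrix (Fin d) (Fin d) ℝ)
    (hA : A = β • (1 : Matrix (Fin d) (Fin d) ℝ) + ∑ k, vecMulVec (u k) (u k)) :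
    |θ ⬝ᵥ x| ≤ Real.sqrt (x ⬝ᵥ (A⁻¹ *ᵥ x)) *
      (Real.sqrt β * Real.sqrt (θ ⬝ᵥ θ) + Real.sqrt (d : ℝ) * ∑ k, |θ ⬝ᵥ u k|) := by
  have hsum : (∑ k, vecMulVec (u k) (u k) : Matrix (Fin d) (Fin d) ℝ).PosSemidef :=
    Finset.sum_induction _ Matrix.PosSemidef (fun a b ha hb => ha.add hb)
      Matrix.PosSemidef.zero (fun k _ => vecMulVec_posSemidef (u k))
  have hApd : A.PosDef := by
    rw [hA]
    refine Matrix.PosDef.add_posSemidef (Matrix.PosDef.of_dotProduct_mulVec_pos ?_ (fun y hy => ?_)) hsum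
    · ext i j; simp [conjTranspose, Matrix.one_apply]
    · have h1 : star y ⬝ᵥ ((β • (1 : Matrix (Fin d) (Fin d) ℝ)) *ᵥ y) = β * (y ⬝ᵥ y) := by
        simp [Matrix.smul_mulVec, Matrix.one_mulVec, star_trivial]
      rw [h1]
      refine mul_pos hβ ?_
      have := Matrix.dotProduct_star_self_pos_iff (v := y)
      simpa using this.mpr hy
  have hAinv : A⁻¹.PosDef := hApd.inv
  have hAsymm : Aᵀ = A := hApd.isHermitian
  have hAunit : IsUnit A.det := hApd.det_pos.ne'.isUnit
  set y : Fin d → ℝ := A⁻¹ *ᵥ x with hy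
  have hAy : A *ᵥ y = x := by
    rw [hy, Matrix.mulVec_mulVec, Matrix.mul_nonsing_inv _ hAunit, Matrix.one_mulVec]
  set a : ℝ := θ ⬝ᵥ (A *ᵥ θ) with ha
  set c : ℝ := x ⬝ᵥ (A⁻¹ *ᵥ x) with hc
  have hc0 : 0 ≤ c := by simpa using hAinv.posSemidef.dotProduct_mulVec_nonneg x
  have ha0 : 0 ≤ a := by simpa using hApd.posSemidef.dotProduct_mulVec_nonneg θ
  have hcross : y ⬝ᵥ (A *ᵥ θ) = θ ⬝ᵥ x := by
    rw [Matrix.dotProduct_mulVec, ← Matrix.mulVec_transpose, hAsymm, hAy, dotProduct_comm]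
  have hyx : y ⬝ᵥ x = c := by rw [hc, hy, dotProduct_comm]
  -- Cauchy–Schwarz in the A-inner-product
  have key : (θ ⬝ᵥ x) ^ 2 ≤ c * a := by
    have hquad : ∀ t : ℝ, 0 ≤ c * (t * t) + (2 * (θ ⬝ᵥ x)) * t + a := by
      intro t
      have h0 := hApd.posSemidef.dotProduct_mulVec_nonneg (θ + t • y)
      simp only [star_trivial] at h0
      have hexp : (θ + t • y) ⬝ᵥ (A *ᵥ (θ + t • y))
          = c * (t * t) + (2 * (θ ⬝ᵥ x)) * t + a := by
        rw [Matrix.mulVec_add, Matrix.mulVec_smul]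
        simp only [dotProduct_add, add_dotProduct, smul_dotProduct, dotProduct_smul,
          smul_eq_mul, hAy, hcross, hyx, ← ha]
        ring
      linarith [hexp ▸ h0]
    have hdisc := discrim_le_zero hquad
    rw [discrim] at hdisc
    nlinarith
  have habs : |θ ⬝ᵥ x| ≤ Real.sqrt c * Real.sqrt a := by
    rw [← Real.sqrt_sq_eq_abs, ← Real.sqrt_mul hc0]
    exact Real.sqrt_le_sqrt key
  -- compute a
  have haval : a = β * (θ ⬝ᵥ θ) + ∑ k, (θ ⬝ᵥ u k) ^ 2 := by
    rw [ha, hA, Matrix.add_mulVec, dotProduct_add, sum_mulVec', dotProduct_sum']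
    congr 1
    · simp [Matrix.smul_mulVec, Matrix.one_mulVec]
    · refine Finset.sum_congr rfl fun k _ => ?_
      rw [quad_vecMulVec, dotProduct_comm (u k) θ, sq]
  have hs0 : (0:ℝ) ≤ θ ⬝ᵥ θ := by
    simpa using (dotProduct_star_self_nonneg θ)
  have hsum0 : (0:ℝ) ≤ ∑ k, |θ ⬝ᵥ u k| := Finset.sum_nonneg fun k _ => abs_nonneg _
  have hsqa : Real.sqrt a ≤ Real.sqrt β * Real.sqrt (θ ⬝ᵥ θ) + ∑ k, |θ ⬝ᵥ u k| := by
    rw [haval]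
    calc Real.sqrt (β * (θ ⬝ᵥ θ) + ∑ k, (θ ⬝ᵥ u k) ^ 2)
        ≤ Real.sqrt (β * (θ ⬝ᵥ θ)) + Real.sqrt (∑ k, (θ ⬝ᵥ u k) ^ 2) :=
          sqrt_add_le' (by positivity) (by positivity)
      _ ≤ Real.sqrt β * Real.sqrt (θ ⬝ᵥ θ) + ∑ k, |θ ⬝ᵥ u k| := by
          gcongr
          · rw [Real.sqrt_mul hβ.le]
          · calc Real.sqrt (∑ k, (θ ⬝ᵥ u k) ^ 2)
                ≤ Real.sqrt ((∑ k, |θ ⬝ᵥ u k|) ^ 2) := by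
                  apply Real.sqrt_le_sqrt
                  have := Finset.sum_sq_le_sq_sum_of_nonneg
                    (s := Finset.univ) (f := fun k => |θ ⬝ᵥ u k|)
                    (fun i _ => abs_nonneg _)
                  simpa [sq_abs] using this
              _ = ∑ k, |θ ⬝ᵥ u k| := Real.sqrt_sq hsum0
  have hd1 : (1:ℝ) ≤ Real.sqrt d := by
    rw [Real.one_le_sqrt]
    exact_mod_cast hd
  calc |θ ⬝ᵥ x| ≤ Real.sqrt c * Real.sqrt a := habs
    _ ≤ Real.sqrt c * (Real.sqrt β * Real.sqrt (θ ⬝ᵥ θ) + Real.sqrt d * ∑ k, |θ ⬝ᵥ u k|) := by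
        apply mul_le_mul_of_nonneg_left _ (Real.sqrt_nonneg c)
        refine hsqa.trans ?_
        have : (∑ k, |θ ⬝ᵥ u k|) ≤ Real.sqrt d * ∑ k, |θ ⬝ᵥ u k| :=
          le_mul_of_one_le_left hsum0 hd1
        linarith
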